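/- Let u be an element of the subgroup of the orthogonal group of ℝ^n generated by the reflections {s_j : 1 ≤ j ≤ n, j ≠ 2} such that u(α_j) is a negative root for every j ≠ 2 (u is the longest element of the parabolic Weyl group W_{Δ∖{α_2}}). Then u(α_2) = α_0 − α_2. -/
import Mathlib


open scoped InnerProductSpace

private lemma sRefl_invol {V : Type*} [NormedAddCommGroup V] [InnerProductSpace ℝ V]
    (b x : V) :
    (x - (2 * ⟪x, b⟫_ℝ / ⟪b, b⟫_ℝ) • b) -
      (2 * ⟪x - (2 * ⟪x, b⟫_ℝ / ⟪b, b⟫_ℝ) • b, b⟫_ℝ / ⟪b, b⟫_ℝ) • b = x := by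
  by_cases hb : b = 0
  · simp [hb]
  · have h : ⟪b, b⟫_ℝ ≠ 0 := fun h => hb (inner_self_eq_zero.mp h)
    have key : 2 * ⟪x - (2 * ⟪x, b⟫_ℝ / ⟪b, b⟫_ℝ) • b, b⟫_ℝ / ⟪b, b⟫_ℝ
        = -(2 * ⟪x, b⟫_ℝ / ⟪b, b⟫_ℝ) := by
      rw [inner_sub_left, real_inner_smul_left]
      field_simp
      ring
    rw [key, neg_smul, sub_neg_eq_add, sub_add_cancel]

/-- The reflection `s_b : x ↦ x - (2⟪x,b⟫/⟪b,b⟫) • b`, as a permutation of `V`. -/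
noncomputable def sRefl {V : Type*} [NormedAddCommGroup V] [InnerProductSpace ℝ V]
    (b : V) : Equiv.Perm V where
  toFun x := x - (2 * ⟪x, b⟫_ℝ / ⟪b, b⟫_ℝ) • b
  invFun x := x - (2 * ⟪x, b⟫_ℝ / ⟪b, b⟫_ℝ) • b
  left_inv x := sRefl_invol b x
  right_inv x := sRefl_invol b x

/-- `E n i` is the `i`-th standard basis vector of `ℝ^n` (for indices `1 ≤ i ≤ n`). -/
noncomputable def E (n i : ℕ) : EuclideanSpace ℝ (Fin n) :=
  if h : 1 ≤ i ∧ i ≤ n then EuclideanSpace.single (⟨i - 1, by omega⟩ : Fin n) 1 else 0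

/-- The simple roots of type `Bₙ` (indexed by `1 ≤ i ≤ n`):
`αᵢ = eᵢ - eᵢ₊₁` for `i ≤ n - 1` and `αₙ = eₙ`. -/
noncomputable def alphaB (n i : ℕ) : EuclideanSpace ℝ (Fin n) :=
  if i = n then E n n else E n i - E n (i + 1)

/-- The roots of type `Bₙ`: `±eᵢ ± eⱼ` (`1 ≤ i < j ≤ n`) and `±eᵢ` (`1 ≤ i ≤ n`). -/
def RootB (n : ℕ) : Set (EuclideanSpace ℝ (Fin n)) :=
  {x | (∃ i j, 1 ≤ i ∧ i < j ∧ j ≤ n ∧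
      (x = E n i + E n j ∨ x = -(E n i + E n j) ∨ x = E n i - E n j ∨ x = E n j - E n i)) ∨
    (∃ i, 1 ≤ i ∧ i ≤ n ∧ (x = E n i ∨ x = -E n i))}

/-- A positive root of type `Bₙ`: a root which is a nonnegative integer combination of
the simple roots. -/
def IsPosB (n : ℕ) (x : EuclideanSpace ℝ (Fin n)) : Prop :=
  x ∈ RootB n ∧ ∃ c : ℕ → ℕ, x = ∑ i ∈ Finset.Icc 1 n, (c i : ℝ) • alphaB n i

/-- A negative root of type `Bₙ`: the negative of a positive root. -/
def IsNegB (n : ℕ) (x : EuclideanSpace ℝ (Fin n)) : Prop :=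
  IsPosB n (-x)

/-- The simple reflections `sᵢ = s_{αᵢ}` of type `Bₙ`. -/
noncomputable def sB (n i : ℕ) : Equiv.Perm (EuclideanSpace ℝ (Fin n)) :=
  sRefl (alphaB n i)


noncomputable def fB (n : ℕ) (x : EuclideanSpace ℝ (Fin n)) : ℝ :=
  ∑ m : Fin n, ((n : ℝ) - (m : ℕ)) * x m

lemma fB_zero (n : ℕ) : fB n 0 = 0 := by
  simp only [fB]
  refine Finset.sum_eq_zero fun m _ => ?_
  have : (0 : EuclideanSpace ℝ (Fin n)) m = 0 := rfl
  rw [this, mul_zero]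

lemma fB_add (n : ℕ) (x y : EuclideanSpace ℝ (Fin n)) : fB n (x + y) = fB n x + fB n y := by
  simp only [fB, ← Finset.sum_add_distrib]
  refine Finset.sum_congr rfl fun m _ => ?_
  have : (x + y) m = x m + y m := rfl
  rw [this]; ring

lemma fB_neg (n : ℕ) (x : EuclideanSpace ℝ (Fin n)) : fB n (-x) = -fB n x := by
  have := fB_add n x (-x)
  rw [add_neg_cancel, fB_zero] at this
  linarith

lemma fB_sub (n : ℕ) (x y : EuclideanSpace ℝ (Fin n)) : fB n (x - y) = fB n x - fB n y := by
  rw [sub_eq_add_neg, fB_add, fB_neg, sub_eq_add_neg]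

lemma fB_smul (n : ℕ) (c : ℝ) (x : EuclideanSpace ℝ (Fin n)) : fB n (c • x) = c * fB n x := by
  simp only [fB, Finset.mul_sum]
  refine Finset.sum_congr rfl fun m _ => ?_
  have : (c • x) m = c * x m := rfl
  rw [this]; ring

lemma fB_sum (n : ℕ) {ι : Type*} (s : Finset ι) (f : ι → EuclideanSpace ℝ (Fin n)) :
    fB n (∑ i ∈ s, f i) = ∑ i ∈ s, fB n (f i) := by
  classical
  induction s using Finset.cons_induction with
  | empty => simp [fB_zero]
  | cons a s ha ih => rw [Finset.sum_cons, Finset.sum_cons, fB_add, ih]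

lemma fB_E (n i : ℕ) (h1 : 1 ≤ i) (h2 : i ≤ n) : fB n (E n i) = (n : ℝ) + 1 - i := by
  rw [E, dif_pos ⟨h1, h2⟩]
  simp only [fB, EuclideanSpace.single_apply, mul_ite, mul_one, mul_zero]
  rw [Finset.sum_ite_eq' Finset.univ (⟨i - 1, by omega⟩ : Fin n)]
  simp only [Finset.mem_univ, if_true]
  have : ((i - 1 : ℕ) : ℝ) = (i : ℝ) - 1 := by
    push_cast [Nat.cast_sub h1]; ring
  rw [this]; ring

lemma fB_alpha (n i : ℕ) (h1 : 1 ≤ i) (h2 : i ≤ n) : fB n (alphaB n i) = 1 := by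
  rw [alphaB]
  by_cases h : i = n
  · rw [if_pos h, fB_E n n (by omega) le_rfl]; ring
  · rw [if_neg h, fB_sub, fB_E n i h1 h2, fB_E n (i + 1) (by omega) (by omega)]
    push_cast; ring

lemma fB_of_neg (n : ℕ) (x : EuclideanSpace ℝ (Fin n)) (h : IsNegB n x) : fB n x ≤ 0 := by
  obtain ⟨-, c, hc⟩ := h
  have : fB n (-x) = ∑ i ∈ Finset.Icc 1 n, (c i : ℝ) := by
    rw [hc, fB_sum]
    refine Finset.sum_congr rfl fun i hi => ?_
    rw [Finset.mem_Icc] at hi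
    rw [fB_smul, fB_alpha n i hi.1 hi.2, mul_one]
  have h2 : (0 : ℝ) ≤ fB n (-x) := by
    rw [this]; positivity
  rw [fB_neg] at h2; linarith

lemma E_ne (n i j : ℕ) (hi1 : 1 ≤ i) (hin : i ≤ n) (hj1 : 1 ≤ j) (hjn : j ≤ n)
    (hij : i ≠ j) : E n i ≠ E n j := by
  intro h
  have := congrArg (fB n) h
  rw [fB_E n i hi1 hin, fB_E n j hj1 hjn] at this
  have : (i : ℝ) = j := by linarith
  exact hij (by exact_mod_cast this)

lemma sRefl_apply {V : Type*} [NormedAddCommGroup V] [InnerProductSpace ℝ V] (b x : V) :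
    sRefl b x = x - (2 * ⟪x, b⟫_ℝ / ⟪b, b⟫_ℝ) • b := rfl

lemma sRefl_add {V : Type*} [NormedAddCommGroup V] [InnerProductSpace ℝ V] (b x y : V) :
    sRefl b (x + y) = sRefl b x + sRefl b y := by
  simp only [sRefl_apply, inner_add_left]
  have : 2 * (⟪x, b⟫_ℝ + ⟪y, b⟫_ℝ) / ⟪b, b⟫_ℝ
      = 2 * ⟪x, b⟫_ℝ / ⟪b, b⟫_ℝ + 2 * ⟪y, b⟫_ℝ / ⟪b, b⟫_ℝ := by ring
  rw [this, add_smul]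
  abel

lemma sRefl_inv {V : Type*} [NormedAddCommGroup V] [InnerProductSpace ℝ V] (b : V) :
    (sRefl b)⁻¹ = sRefl b := rfl

lemma inner_E (n i j : ℕ) (hi1 : 1 ≤ i) (hin : i ≤ n) (hj1 : 1 ≤ j) (hjn : j ≤ n) :
    ⟪E n i, E n j⟫_ℝ = if i = j then 1 else 0 := by
  rw [E, E, dif_pos ⟨hi1, hin⟩, dif_pos ⟨hj1, hjn⟩]
  rw [show ((1 : ℝ)) = ((1 : ℝ) : ℝ) from rfl, EuclideanSpace.inner_single_left]
  simp only [EuclideanSpace.single_apply, map_one, one_mul]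
  by_cases h : i = j
  · rw [if_pos h, if_pos (by subst h; rfl)]
  · rw [if_neg h, if_neg (by intro hc; simp only [Fin.mk.injEq] at hc; omega)]


lemma sB_fix (n j i : ℕ) (hj1 : 1 ≤ j) (hjn : j ≤ n) (hi1 : 1 ≤ i) (hin : i ≤ n)
    (h1 : i ≠ j) (h2 : i ≠ j + 1) : sB n j (E n i) = E n i := by
  have hz : ⟪E n i, alphaB n j⟫_ℝ = 0 := by
    rw [alphaB]
    by_cases h : j = n
    · rw [if_pos h, inner_E n i n hi1 hin (by omega) le_rfl, if_neg (by omega)]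
    · rw [if_neg h, inner_sub_right, inner_E n i j hi1 hin hj1 hjn,
        inner_E n i (j + 1) hi1 hin (by omega) (by omega), if_neg h1, if_neg h2, sub_zero]
  rw [sB, sRefl_apply, hz]
  simp

lemma sB_swap₁ (n j : ℕ) (hj1 : 1 ≤ j) (hjn : j + 1 ≤ n) : sB n j (E n j) = E n (j + 1) := by
  have hjn' : j ≠ n := by omega
  have hij : ⟪E n j, alphaB n j⟫_ℝ = 1 := by
    rw [alphaB, if_neg hjn', inner_sub_right, inner_E n j j hj1 (by omega) hj1 (by omega),
      inner_E n j (j + 1) hj1 (by omega) (by omega) hjn, if_pos rfl, if_neg (by omega)]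
    ring
  have hbb : ⟪alphaB n j, alphaB n j⟫_ℝ = 2 := by
    rw [alphaB, if_neg hjn', inner_sub_left, inner_sub_right, inner_sub_right,
      inner_E n j j hj1 (by omega) hj1 (by omega),
      inner_E n j (j + 1) hj1 (by omega) (by omega) hjn,
      inner_E n (j + 1) j (by omega) hjn hj1 (by omega),
      inner_E n (j + 1) (j + 1) (by omega) hjn (by omega) hjn,
      if_pos rfl, if_pos rfl, if_neg (by omega), if_neg (by omega)]
    ring
  rw [sB, sRefl_apply, hij, hbb]
  rw [show 2 * 1 / (2 : ℝ) = 1 by norm_num, one_smul, alphaB, if_neg hjn']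
  abel

lemma sB_swap₂ (n j : ℕ) (hj1 : 1 ≤ j) (hjn : j + 1 ≤ n) : sB n j (E n (j + 1)) = E n j := by
  have hjn' : j ≠ n := by omega
  have hij : ⟪E n (j + 1), alphaB n j⟫_ℝ = -1 := by
    rw [alphaB, if_neg hjn', inner_sub_right,
      inner_E n (j + 1) j (by omega) hjn hj1 (by omega),
      inner_E n (j + 1) (j + 1) (by omega) hjn (by omega) hjn, if_pos rfl, if_neg (by omega)]
    ring
  have hbb : ⟪alphaB n j, alphaB n j⟫_ℝ = 2 := by
    rw [alphaB, if_neg hjn', inner_sub_left, inner_sub_right, inner_sub_right,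
      inner_E n j j hj1 (by omega) hj1 (by omega),
      inner_E n j (j + 1) hj1 (by omega) (by omega) hjn,
      inner_E n (j + 1) j (by omega) hjn hj1 (by omega),
      inner_E n (j + 1) (j + 1) (by omega) hjn (by omega) hjn,
      if_pos rfl, if_pos rfl, if_neg (by omega), if_neg (by omega)]
    ring
  rw [sB, sRefl_apply, hij, hbb]
  rw [show 2 * (-1) / (2 : ℝ) = -1 by norm_num, neg_smul, one_smul, alphaB, if_neg hjn']
  abel

lemma sB_last (n : ℕ) (hn : 1 ≤ n) : sB n n (E n n) = -E n n := by
  have hij : ⟪E n n, alphaB n n⟫_ℝ = 1 := by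
    rw [alphaB, if_pos rfl, inner_E n n n hn le_rfl hn le_rfl, if_pos rfl]
  have hbb : ⟪alphaB n n, alphaB n n⟫_ℝ = 1 := by
    rw [alphaB, if_pos rfl, inner_E n n n hn le_rfl hn le_rfl, if_pos rfl]
  rw [sB, sRefl_apply, hij, hbb, alphaB, if_pos rfl]
  rw [show 2 * 1 / (1 : ℝ) = 2 by norm_num]
  rw [show (2 : ℝ) • E n n = E n n + E n n by rw [two_smul]]
  abel

def PB (n : ℕ) (g : Equiv.Perm (EuclideanSpace ℝ (Fin n))) : Prop :=
  (∀ x y, g (x + y) = g x + g y) ∧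
  ((g (E n 1) = E n 1 ∧ g (E n 2) = E n 2) ∨ (g (E n 1) = E n 2 ∧ g (E n 2) = E n 1)) ∧
  (∀ i, 3 ≤ i → i ≤ n → ∃ k, 3 ≤ k ∧ k ≤ n ∧ (g (E n i) = E n k ∨ g (E n i) = -E n k))

lemma perm_map_zero {n : ℕ} (g : Equiv.Perm (EuclideanSpace ℝ (Fin n)))
    (hadd : ∀ x y, g (x + y) = g x + g y) : g 0 = 0 := by
  have := hadd 0 0
  rw [add_zero] at this
  have h2 : g 0 + g 0 - g 0 = g 0 - g 0 := by rw [← this]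
  simpa using h2

lemma perm_map_neg {n : ℕ} (g : Equiv.Perm (EuclideanSpace ℝ (Fin n)))
    (hadd : ∀ x y, g (x + y) = g x + g y) (x : EuclideanSpace ℝ (Fin n)) :
    g (-x) = -g x := by
  have := hadd x (-x)
  rw [add_neg_cancel, perm_map_zero g hadd] at this
  linear_combination (norm := abel) -this

lemma perm_map_sub {n : ℕ} (g : Equiv.Perm (EuclideanSpace ℝ (Fin n)))
    (hadd : ∀ x y, g (x + y) = g x + g y) (x y : EuclideanSpace ℝ (Fin n)) :
    g (x - y) = g x - g y := by
  rw [sub_eq_add_neg, hadd, perm_map_neg g hadd, sub_eq_add_neg]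

lemma PB_one (n : ℕ) : PB n 1 := by
  refine ⟨fun x y => rfl, Or.inl ⟨rfl, rfl⟩, fun i h3 hn => ⟨i, h3, hn, Or.inl rfl⟩⟩

lemma PB_mul (n : ℕ) (g h : Equiv.Perm (EuclideanSpace ℝ (Fin n)))
    (hg : PB n g) (hh : PB n h) : PB n (g * h) := by
  obtain ⟨ga, g12, gE⟩ := hg
  obtain ⟨ha, h12, hE⟩ := hh
  have app : ∀ x, (g * h) x = g (h x) := fun x => rfl
  refine ⟨?_, ?_, ?_⟩
  · intro x y; rw [app, app, app, ha, ga]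
  · rcases g12 with ⟨g1, g2⟩ | ⟨g1, g2⟩ <;> rcases h12 with ⟨h1, h2⟩ | ⟨h1, h2⟩
    · exact Or.inl ⟨by rw [app, h1, g1], by rw [app, h2, g2]⟩
    · exact Or.inr ⟨by rw [app, h1, g2], by rw [app, h2, g1]⟩
    · exact Or.inr ⟨by rw [app, h1, g1], by rw [app, h2, g2]⟩
    · exact Or.inl ⟨by rw [app, h1, g2], by rw [app, h2, g1]⟩
  · intro i h3 hn
    obtain ⟨k, k3, kn, hk⟩ := hE i h3 hn
    obtain ⟨m, m3, mn, hm⟩ := gE k k3 kn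
    rcases hk with hk | hk <;> rcases hm with hm | hm
    · exact ⟨m, m3, mn, Or.inl (by rw [app, hk, hm])⟩
    · exact ⟨m, m3, mn, Or.inr (by rw [app, hk, hm])⟩
    · exact ⟨m, m3, mn, Or.inr (by rw [app, hk, perm_map_neg g ga, hm])⟩
    · exact ⟨m, m3, mn, Or.inl (by rw [app, hk, perm_map_neg g ga, hm, neg_neg])⟩

lemma PB_gen (n j : ℕ) (hn : 2 ≤ n) (hj1 : 1 ≤ j) (hjn : j ≤ n) (hj2 : j ≠ 2) :
    PB n (sB n j) := by
  refine ⟨fun x y => sRefl_add _ x y, ?_, ?_⟩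
  · by_cases h1 : j = 1
    · subst h1
      exact Or.inr ⟨sB_swap₁ n 1 le_rfl hn, sB_swap₂ n 1 le_rfl hn⟩
    · have hj3 : 3 ≤ j := by omega
      exact Or.inl ⟨sB_fix n j 1 hj1 hjn (by omega) (by omega) (by omega) (by omega),
        sB_fix n j 2 hj1 hjn (by omega) hn (by omega) (by omega)⟩
  · intro i hi3 hin
    by_cases h1 : j = 1
    · subst h1
      exact ⟨i, hi3, hin, Or.inl (sB_fix n 1 i le_rfl hjn (by omega) hin (by omega) (by omega))⟩
    · have hj3 : 3 ≤ j := by omega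
      by_cases hij : i = j
      · subst hij
        by_cases hlast : i = n
        · exact ⟨n, by omega, le_rfl, Or.inr (by rw [hlast]; exact sB_last n (by omega))⟩
        · exact ⟨i + 1, by omega, by omega, Or.inl (sB_swap₁ n i (by omega) (by omega))⟩
      · by_cases hij1 : i = j + 1
        · subst hij1
          exact ⟨j, hj3, by omega, Or.inl (sB_swap₂ n j (by omega) (by omega))⟩
        · exact ⟨i, hi3, hin, Or.inl (sB_fix n j i hj1 hjn (by omega) hin hij hij1)⟩

lemma telescope_aux (n : ℕ) : ∀ d j, 1 ≤ j → j + d = n →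
    (∑ i ∈ Finset.Icc j n, alphaB n i) = E n j := by
  intro d
  induction d with
  | zero =>
    intro j hj he
    have : j = n := by omega
    subst this
    rw [Finset.Icc_self, Finset.sum_singleton, alphaB, if_pos rfl]
  | succ d ih =>
    intro j hj he
    have hjn : j < n := by omega
    rw [← Finset.Ioc_insert_left hjn.le,
      Finset.sum_insert (by simp), show Finset.Ioc j n = Finset.Icc (j + 1) n from (Finset.Icc_add_one_left_eq_Ioc _ _).symm,
      ih (j + 1) (by omega) (by omega), alphaB, if_neg (by omega)]
    abel

/-- Type `Bₙ` (`n ≥ 2`): if `u` is the longest element of the parabolic Weyl group generated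
by the simple reflections `{sⱼ : j ≠ 2}` (i.e. `u` lies in the subgroup generated by these
reflections and sends every simple root `αⱼ`, `j ≠ 2`, to a negative root), then
`u(α₂) = α₀ - α₂`, where `α₀ = e₁ + e₂` is the highest root. -/
theorem stmt_3 (n : ℕ) (hn : 2 ≤ n)
    (u : Equiv.Perm (EuclideanSpace ℝ (Fin n)))
    (hu : u ∈ Subgroup.closure {g | ∃ j, 1 ≤ j ∧ j ≤ n ∧ j ≠ 2 ∧ g = sB n j})
    (hneg : ∀ j, 1 ≤ j → j ≤ n → j ≠ 2 → IsNegB n (u (alphaB n j))) :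
    u (alphaB n 2) = (E n 1 + E n 2) - alphaB n 2 := by
  have hQ : PB n u ∧ PB n u⁻¹ := by
    refine Subgroup.closure_induction (p := fun g _ => PB n g ∧ PB n g⁻¹)
      ?_ ?_ ?_ ?_ hu
    · rintro g ⟨j, hj1, hjn, hj2, rfl⟩
      have hthis := PB_gen n j hn hj1 hjn hj2
      refine ⟨hthis, ?_⟩
      have hinv : (sB n j)⁻¹ = sB n j := sRefl_inv (alphaB n j)
      rw [hinv]
      exact hthis
    · exact ⟨PB_one n, by rw [inv_one]; exact PB_one n⟩
    · rintro g h _ _ ⟨hg, hg'⟩ ⟨hh, hh'⟩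
      exact ⟨PB_mul n g h hg hh, by rw [mul_inv_rev]; exact PB_mul n h⁻¹ g⁻¹ hh' hg'⟩
    · rintro g _ ⟨hg, hg'⟩
      exact ⟨hg', by rw [inv_inv]; exact hg⟩
  obtain ⟨hadd, he12, hEi⟩ := hQ.1
  have hα1 : u (alphaB n 1) = u (E n 1) - u (E n 2) := by
    rw [alphaB, if_neg (by omega : (1 : ℕ) ≠ n), perm_map_sub u hadd]
  have hneg1 := fB_of_neg n _ (hneg 1 le_rfl (by omega) (by omega))
  have hswap : u (E n 1) = E n 2 ∧ u (E n 2) = E n 1 := by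
    rcases he12 with ⟨h1, h2⟩ | h
    · exfalso
      rw [hα1, h1, h2, fB_sub, fB_E n 1 le_rfl (by omega), fB_E n 2 (by omega) hn] at hneg1
      push_cast at hneg1
      linarith
    · exact h
  by_cases hn2 : n = 2
  · subst hn2
    rw [show alphaB 2 2 = E 2 2 from by rw [alphaB, if_pos rfl], hswap.2]
    abel
  · have hn3 : 3 ≤ n := by omega
    have ha2 : alphaB n 2 = E n 2 - E n 3 := by rw [alphaB, if_neg (by omega)]
    have hneg3 : ∀ j, 3 ≤ j → j ≤ n → ∃ k, 3 ≤ k ∧ k ≤ n ∧ u (E n j) = -E n k := by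
      intro j h3 hjn
      obtain ⟨k, k3, kn, hk⟩ := hEi j h3 hjn
      have hfle : fB n (u (E n j)) ≤ 0 := by
        have hsum : u (E n j) = ∑ i ∈ Finset.Icc j n, u (alphaB n i) := by
          rw [← telescope_aux n (n - j) j (by omega) (by omega)]
          exact map_sum (AddMonoidHom.mk' (fun x => u x) hadd) _ _
        rw [hsum, fB_sum]
        refine Finset.sum_nonpos fun i hi => ?_
        rw [Finset.mem_Icc] at hi
        exact fB_of_neg n _ (hneg i (by omega) hi.2 (by omega))
      rcases hk with hk | hk
      · exfalso
        rw [hk, fB_E n k (by omega) kn] at hfle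
        have : (k : ℝ) ≤ n := by exact_mod_cast kn
        linarith
      · exact ⟨k, k3, kn, hk⟩
    have hle : ∀ d j k, 3 ≤ j → j + d = n → 3 ≤ k → k ≤ n → u (E n j) = -E n k → k ≤ j := by
      intro d
      induction d with
      | zero => intro j k h3 he _ kn _; omega
      | succ d ih =>
        intro j k h3 he k3 kn hk
        obtain ⟨k', k'3, k'n, hk'⟩ := hneg3 (j + 1) (by omega) (by omega)
        have hk'le : k' ≤ j + 1 := ih (j + 1) k' (by omega) (by omega) k'3 k'n hk'
        have hf : fB n (u (alphaB n j)) ≤ 0 :=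
          fB_of_neg n _ (hneg j (by omega) (by omega) (by omega))
        have heq : u (alphaB n j) = -E n k - -E n k' := by
          rw [alphaB, if_neg (by omega : j ≠ n), perm_map_sub u hadd, hk, hk']
        rw [heq, fB_sub, fB_neg, fB_neg, fB_E n k (by omega) kn, fB_E n k' (by omega) k'n] at hf
        have hkk' : (k : ℝ) ≤ (k' : ℝ) := by linarith
        have hkk'n : k ≤ k' := by exact_mod_cast hkk'
        have hne : k ≠ k' := by
          intro h
          subst h
          have := u.injective (hk.trans hk'.symm)
          exact E_ne n j (j + 1) (by omega) (by omega) (by omega) (by omega) (by omega) this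
        omega
    obtain ⟨k, k3, kn, hk⟩ := hneg3 3 le_rfl hn3
    have hk3 : k = 3 := by
      have := hle (n - 3) 3 k le_rfl (by omega) k3 kn hk
      omega
    subst hk3
    have hfin : u (alphaB n 2) = u (E n 2) - u (E n 3) := by
      rw [ha2, perm_map_sub u hadd]
    rw [hfin, hswap.2, hk, ha2]
    abel
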